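/- For |s| < 1, π·cot(πs) = 1/s - 2·∑_{j=1}^∞ ζ(2j)·s^{2j-1}, where the series converges absolutely for |s| < 1. -/

import Mathlib

open scoped BigOperators

/-- ζ(p) = ∑_{n=1}^∞ 1/n^p -/
noncomputable def zetaR (p : ℕ) : ℝ := ∑' n : ℕ, 1 / ((n : ℝ) + 1) ^ p

open Filter Topology

private lemma summable_inv_sq : Summable (fun n : ℕ => 1 / ((n:ℝ)+1)^2) := by
  have := (Real.summable_one_div_nat_pow (p := 2)).2 (by norm_num)
  have h2 := (summable_nat_add_iff 1).2 this
  simpa using h2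

private lemma fact_pos (n : ℕ) {y : ℝ} (hy : |y| < 1) :
    0 < 1 - y^2/((n:ℝ)+1)^2 := by
  have hc : (1:ℝ) ≤ ((n:ℝ)+1)^2 := by nlinarith [Nat.cast_nonneg (α := ℝ) n]
  have h1 : y^2 < 1 := by nlinarith [abs_nonneg y, sq_abs y]
  have : y^2 / ((n:ℝ)+1)^2 < 1 := by
    rw [div_lt_one (by linarith)]; linarith
  linarith

private lemma hasDerivAt_g (n : ℕ) {y : ℝ} (hy : |y| < 1) :
    HasDerivAt (fun z : ℝ => Real.log (1 - z^2/((n:ℝ)+1)^2))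
      (-(2*y/(((n:ℝ)+1)^2 - y^2))) y := by
  have hc : (0:ℝ) < ((n:ℝ)+1)^2 := by positivity
  have hc1 : (1:ℝ) ≤ ((n:ℝ)+1)^2 := by nlinarith [Nat.cast_nonneg (α := ℝ) n]
  have hpos := fact_pos n hy
  have h1 : y^2 < 1 := by nlinarith [abs_nonneg y, sq_abs y]
  have hne : ((n:ℝ)+1)^2 - y^2 ≠ 0 := by nlinarith
  have hd : HasDerivAt (fun z : ℝ => 1 - z^2/((n:ℝ)+1)^2) (-(2*y/((n:ℝ)+1)^2)) y := by
    simpa using (((hasDerivAt_pow 2 y).div_const (((n:ℝ)+1)^2)).const_sub 1)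
  have := hd.log (ne_of_gt hpos)
  convert this using 1
  field_simp

private lemma g_summable_and_tsum {y : ℝ} (hy0 : 0 < y) (hy1 : y < 1) :
    Summable (fun n : ℕ => Real.log (1 - y^2/((n:ℝ)+1)^2)) ∧
    ∑' n : ℕ, Real.log (1 - y^2/((n:ℝ)+1)^2)
      = Real.log (Real.sin (Real.pi*y)) - Real.log (Real.pi*y) := by
  have hya : |y| < 1 := by rw [abs_of_pos hy0]; exact hy1
  have hπy : 0 < Real.pi * y := by positivity
  have hsin : 0 < Real.sin (Real.pi * y) :=
    Real.sin_pos_of_pos_of_lt_pi hπy (by nlinarith [Real.pi_pos])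
  set L : ℝ := Real.sin (Real.pi*y) / (Real.pi*y) with hL
  have hLpos : 0 < L := div_pos hsin hπy
  -- partial products tend to L
  have hP : Tendsto (fun N : ℕ => ∏ j ∈ Finset.range N, ((1:ℝ) - y^2/((j:ℝ)+1)^2))
      atTop (𝓝 L) := by
    have := (Real.tendsto_euler_sin_prod y).div_const (Real.pi * y)
    simpa only [mul_div_cancel_left₀ _ (ne_of_gt hπy)] using this
  -- partial sums of logs tend to log L
  have hS : Tendsto (fun N : ℕ => ∑ j ∈ Finset.range N, Real.log (1 - y^2/((j:ℝ)+1)^2))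
      atTop (𝓝 (Real.log L)) := by
    have hcont := (Real.continuousAt_log (ne_of_gt hLpos)).tendsto.comp hP
    refine hcont.congr fun N => ?_
    exact Real.log_prod fun j _ => ne_of_gt (fact_pos j hya)
  -- summability
  have hnonneg : ∀ n : ℕ, 0 ≤ -Real.log (1 - y^2/((n:ℝ)+1)^2) := by
    intro n
    have h1 : 1 - y^2/((n:ℝ)+1)^2 ≤ 1 := by
      have : 0 ≤ y^2/((n:ℝ)+1)^2 := by positivity
      linarith
    simpa using Real.log_nonpos (le_of_lt (fact_pos n hya)) h1
  have hmono : Monotone (fun N : ℕ => ∑ j ∈ Finset.range N, -Real.log (1 - y^2/((j:ℝ)+1)^2)) := by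
    intro a b hab
    exact Finset.sum_le_sum_of_subset_of_nonneg (Finset.range_subset_range.2 hab)
      (fun i _ _ => hnonneg i)
  have hSneg : Tendsto (fun N : ℕ => ∑ j ∈ Finset.range N, -Real.log (1 - y^2/((j:ℝ)+1)^2))
      atTop (𝓝 (-Real.log L)) := by
    simpa [Finset.sum_neg_distrib] using hS.neg
  have hsum : Summable (fun n : ℕ => Real.log (1 - y^2/((n:ℝ)+1)^2)) := by
    have h1 : Summable (fun n : ℕ => -Real.log (1 - y^2/((n:ℝ)+1)^2)) :=
      summable_of_sum_range_le hnonneg (fun n => hmono.ge_of_tendsto hSneg n)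
    simpa using h1.neg
  refine ⟨hsum, ?_⟩
  have := hsum.hasSum.tendsto_sum_nat
  have heq := tendsto_nhds_unique this hS
  rw [heq, hL, Real.log_div (ne_of_gt hsin) (ne_of_gt hπy)]

set_option maxHeartbeats 1000000 in
private lemma cot_pf_pos {x : ℝ} (hx0 : 0 < x) (hx1 : x < 1) :
    Real.pi * Real.cot (Real.pi * x) =
      1 / x - ∑' n : ℕ, 2*x/(((n:ℝ)+1)^2 - x^2) := by
  set r : ℝ := (x+1)/2 with hrdef
  have hxr : x < r := by rw [hrdef]; linarith
  have hr1 : r < 1 := by rw [hrdef]; linarith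
  have hr0 : 0 < r := by rw [hrdef]; linarith
  set t : Set ℝ := Set.Ioo (-r) r with htdef
  have ht : IsOpen t := isOpen_Ioo
  have htc : IsPreconnected t := (convex_Ioo _ _).isPreconnected
  set u : ℕ → ℝ := fun n => 2*r/(1-r^2) * (1/((n:ℝ)+1)^2) with hudef
  have hu : Summable u := summable_inv_sq.mul_left _
  have hmem : ∀ y ∈ t, |y| < r := fun y hy => abs_lt.2 ⟨hy.1, hy.2⟩
  have hg : ∀ (n : ℕ), ∀ y ∈ t, HasDerivAt (fun z : ℝ => Real.log (1 - z^2/((n:ℝ)+1)^2))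
      (-(2*y/(((n:ℝ)+1)^2 - y^2))) y :=
    fun n y hy => hasDerivAt_g n (lt_trans (hmem y hy) hr1)
  have hbound : ∀ (n : ℕ), ∀ y ∈ t, ‖-(2*y/(((n:ℝ)+1)^2 - y^2))‖ ≤ u n := by
    intro n y hy
    have hyr := hmem y hy
    have hy1 : |y| < 1 := lt_trans hyr hr1
    have hc1 : (1:ℝ) ≤ ((n:ℝ)+1)^2 := by nlinarith [Nat.cast_nonneg (α := ℝ) n]
    have hy2 : y^2 < 1 := by nlinarith [abs_nonneg y, sq_abs y]
    have hden : 0 < ((n:ℝ)+1)^2 - y^2 := by nlinarith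
    have hyr2 : y^2 ≤ r^2 := by nlinarith [abs_nonneg y, sq_abs y]
    have hdd : (1-r^2) * ((n:ℝ)+1)^2 ≤ ((n:ℝ)+1)^2 - y^2 := by nlinarith
    have key : 2*|y| / (((n:ℝ)+1)^2 - y^2) ≤ 2*r / ((1-r^2) * ((n:ℝ)+1)^2) :=
      div_le_div₀ (by linarith) (by linarith) (mul_pos (by nlinarith) (by positivity)) hdd
    have hrw : 2*r / ((1-r^2) * ((n:ℝ)+1)^2) = u n := by
      rw [hudef]
      have h1 : (1:ℝ) - r^2 ≠ 0 := by nlinarith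
      have h2 : ((n:ℝ)+1)^2 ≠ 0 := by positivity
      field_simp
    rw [norm_neg, Real.norm_eq_abs, abs_div, abs_of_pos hden, ← hrw]
    calc |2*y| / (((n:ℝ)+1)^2 - y^2) = 2*|y| / (((n:ℝ)+1)^2 - y^2) := by
          rw [abs_mul, abs_two]
      _ ≤ _ := key
  have h0t : (0:ℝ) ∈ t := ⟨by linarith, hr0⟩
  have hg0 : Summable (fun n : ℕ => Real.log (1 - (0:ℝ)^2/((n:ℝ)+1)^2)) := by
    have : (fun n : ℕ => Real.log (1 - (0:ℝ)^2/((n:ℝ)+1)^2)) = fun _ => 0 := by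
      funext n; simp
    rw [this]; exact summable_zero
  have hxt : x ∈ t := ⟨by linarith, hxr⟩
  have hG : HasDerivAt (fun z : ℝ => ∑' n : ℕ, Real.log (1 - z^2/((n:ℝ)+1)^2))
      (∑' n : ℕ, -(2*x/(((n:ℝ)+1)^2 - x^2))) x :=
    hasDerivAt_tsum_of_isPreconnected hu ht htc hg hbound h0t hg0 hxt
  -- transfer to H
  have hπx : 0 < Real.pi * x := by positivity
  have hsinx : 0 < Real.sin (Real.pi * x) :=
    Real.sin_pos_of_pos_of_lt_pi hπx (by nlinarith [Real.pi_pos])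
  have heq : ∀ᶠ y in 𝓝 x, (fun z : ℝ => Real.log (Real.sin (Real.pi*z)) - Real.log (Real.pi*z)) y
      = (fun z : ℝ => ∑' n : ℕ, Real.log (1 - z^2/((n:ℝ)+1)^2)) y := by
    filter_upwards [isOpen_Ioo.eventually_mem (⟨hx0, hx1⟩ : x ∈ Set.Ioo (0:ℝ) 1)] with y hy
    exact ((g_summable_and_tsum hy.1 hy.2).2).symm
  have hH : HasDerivAt (fun z : ℝ => Real.log (Real.sin (Real.pi*z)) - Real.log (Real.pi*z))
      (∑' n : ℕ, -(2*x/(((n:ℝ)+1)^2 - x^2))) x := hG.congr_of_eventuallyEq heq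
  -- direct derivative of H
  have hlin : HasDerivAt (fun z : ℝ => Real.pi * z) (Real.pi * 1) x :=
    (hasDerivAt_id x).const_mul Real.pi
  have hH1 : HasDerivAt (fun z : ℝ => Real.log (Real.sin (Real.pi*z)))
      (Real.cos (Real.pi*x) * (Real.pi * 1) / Real.sin (Real.pi*x)) x :=
    (((Real.hasDerivAt_sin (Real.pi*x)).comp x hlin)).log (ne_of_gt hsinx)
  have hH2 : HasDerivAt (fun z : ℝ => Real.log (Real.pi*z)) (Real.pi * 1 / (Real.pi*x)) x :=
    hlin.log (ne_of_gt hπx)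
  have hHd := hH1.sub hH2
  have huniq := hH.unique hHd
  have hπ0 : Real.pi ≠ 0 := ne_of_gt Real.pi_pos
  rw [Real.cot_eq_cos_div_sin]
  have h1x : Real.pi * 1 / (Real.pi * x) = 1 / x := by
    field_simp
  have h2x : Real.cos (Real.pi*x) * (Real.pi * 1) / Real.sin (Real.pi*x)
      = Real.pi * (Real.cos (Real.pi*x) / Real.sin (Real.pi*x)) := by
    field_simp
  rw [h1x, h2x, tsum_neg] at huniq
  linarith [huniq]

private lemma F_eq (s : ℝ) (n j : ℕ) :
    (s/((n:ℝ)+1)^2) * (s^2/((n:ℝ)+1)^2)^j = s^(2*(j+1)-1) * (1/((n:ℝ)+1)^(2*(j+1))) := by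
  have h : 2*(j+1)-1 = 2*j+1 := by omega
  rw [h, div_pow, div_mul_div_comm, ← pow_mul, ← pow_mul]
  rw [one_div, mul_comm (s^(2*j+1)), ← div_eq_inv_mul]
  congr 1
  · ring
  · ring

set_option maxHeartbeats 1000000 in
private lemma seriesB {s : ℝ} (hs : |s| < 1) :
    (∑' n : ℕ, 2*s/(((n:ℝ)+1)^2 - s^2)
        = 2 * ∑' j : ℕ, zetaR (2*(j+1)) * s ^ (2*(j+1)-1))
    ∧ Summable (fun j : ℕ => |zetaR (2*(j+1)) * s ^ (2*(j+1)-1)|) := by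
  have hs2 : s^2 < 1 := by nlinarith [abs_nonneg s, sq_abs s]
  set F : ℕ → ℕ → ℝ := fun n j => (s/((n:ℝ)+1)^2) * (s^2/((n:ℝ)+1)^2)^j with hF
  have hc : ∀ n : ℕ, (1:ℝ) ≤ ((n:ℝ)+1)^2 :=
    fun n => by nlinarith [Nat.cast_nonneg (α := ℝ) n]
  have hc0 : ∀ n : ℕ, (0:ℝ) < ((n:ℝ)+1)^2 := fun n => by positivity
  have hq0 : ∀ n : ℕ, (0:ℝ) ≤ s^2/((n:ℝ)+1)^2 := fun n => by positivity
  have hq1 : ∀ n : ℕ, s^2/((n:ℝ)+1)^2 < 1 := by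
    intro n; rw [div_lt_one (hc0 n)]; linarith [hc n]
  have hqs : ∀ n : ℕ, s^2/((n:ℝ)+1)^2 ≤ s^2 := by
    intro n
    rw [div_le_iff₀ (hc0 n)]
    nlinarith [sq_nonneg s, hc n]
  -- absolute values
  have habs : ∀ n j : ℕ, |F n j| = (|s|/((n:ℝ)+1)^2) * (s^2/((n:ℝ)+1)^2)^j := by
    intro n j
    rw [hF, abs_mul, abs_div, abs_of_pos (hc0 n),
      abs_of_nonneg (pow_nonneg (hq0 n) j)]
  -- summability of |F| over the product
  have hinner : ∀ n : ℕ, Summable (fun j : ℕ => (|s|/((n:ℝ)+1)^2) * (s^2/((n:ℝ)+1)^2)^j) :=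
    fun n => (summable_geometric_of_lt_one (hq0 n) (hq1 n)).mul_left _
  have houter : Summable (fun n : ℕ =>
      ∑' j : ℕ, (|s|/((n:ℝ)+1)^2) * (s^2/((n:ℝ)+1)^2)^j) := by
    refine Summable.of_nonneg_of_le (f := fun n : ℕ => |s| * (1-s^2)⁻¹ * (1/((n:ℝ)+1)^2))
      (fun n => tsum_nonneg fun j => mul_nonneg (by positivity) (pow_nonneg (hq0 n) j))
      (fun n => ?_) (summable_inv_sq.mul_left _)
    rw [tsum_mul_left, tsum_geometric_of_lt_one (hq0 n) (hq1 n)]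
    have h1 : (1 - s^2/((n:ℝ)+1)^2)⁻¹ ≤ (1-s^2)⁻¹ := by
      apply inv_anti₀ (by linarith) (by linarith [hqs n])
    calc |s|/((n:ℝ)+1)^2 * (1 - s^2/((n:ℝ)+1)^2)⁻¹
        ≤ |s|/((n:ℝ)+1)^2 * (1-s^2)⁻¹ := by
          apply mul_le_mul_of_nonneg_left h1 (by positivity)
      _ = |s| * (1-s^2)⁻¹ * (1/((n:ℝ)+1)^2) := by ring
  have hFabs : Summable (fun p : ℕ × ℕ =>
      (|s|/((p.1:ℝ)+1)^2) * (s^2/((p.1:ℝ)+1)^2)^p.2) := by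
    exact (summable_prod_of_nonneg (fun p => by positivity)).2 ⟨fun n => hinner n, houter⟩
  have hFsum : Summable (Function.uncurry F) := by
    apply Summable.of_abs
    refine hFabs.congr fun p => ?_
    exact (habs p.1 p.2).symm
  -- swapped summability
  have hFabs' : Summable (fun j : ℕ =>
      ∑' n : ℕ, (|s|/((n:ℝ)+1)^2) * (s^2/((n:ℝ)+1)^2)^j) := by
    have hswap : Summable (fun p : ℕ × ℕ =>
        (|s|/((p.2:ℝ)+1)^2) * (s^2/((p.2:ℝ)+1)^2)^p.1) := by
      have := hFabs.prod_symm
      exact this.congr fun p => rfl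
    exact ((summable_prod_of_nonneg (fun p => by positivity)).1 hswap).2
  -- zetaR facts
  have hzsum : ∀ j : ℕ, Summable (fun n : ℕ => 1/((n:ℝ)+1)^(2*(j+1))) := by
    intro j
    apply Summable.of_nonneg_of_le (fun n => by positivity) (fun n => ?_) summable_inv_sq
    apply one_div_le_one_div_of_le (hc0 n)
    calc ((n:ℝ)+1)^2 = ((n:ℝ)+1)^2 * 1 := by ring
      _ ≤ ((n:ℝ)+1)^2 * ((n:ℝ)+1)^(2*j) := by
          have hb : (1:ℝ) ≤ (n:ℝ)+1 := by have := Nat.cast_nonneg (α := ℝ) n; linarith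
          exact mul_le_mul_of_nonneg_left (one_le_pow₀ hb) (le_of_lt (hc0 n))
      _ = ((n:ℝ)+1)^(2*(j+1)) := by rw [← pow_add]; ring_nf
  have hzeta_nonneg : ∀ p : ℕ, 0 ≤ zetaR p :=
    fun p => tsum_nonneg (fun n => by positivity)
  have hjabs : ∀ j : ℕ, |zetaR (2*(j+1)) * s ^ (2*(j+1)-1)|
      = ∑' n : ℕ, (|s|/((n:ℝ)+1)^2) * (s^2/((n:ℝ)+1)^2)^j := by
    intro j
    have h1 : ∀ n : ℕ, (|s|/((n:ℝ)+1)^2) * (s^2/((n:ℝ)+1)^2)^j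
        = |s|^(2*(j+1)-1) * (1/((n:ℝ)+1)^(2*(j+1))) := by
      intro n
      have := F_eq |s| n j
      rwa [sq_abs] at this
    rw [tsum_congr h1, tsum_mul_left, abs_mul, abs_pow, abs_of_nonneg (hzeta_nonneg _)]
    rw [mul_comm]
    congr 1
  have hrow : ∀ n : ℕ, ∑' j : ℕ, F n j = s/(((n:ℝ)+1)^2 - s^2) := by
    intro n
    simp only [hF]
    rw [tsum_mul_left, tsum_geometric_of_lt_one (hq0 n) (hq1 n)]
    have h1 : ((n:ℝ)+1)^2 ≠ 0 := ne_of_gt (hc0 n)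
    have h2 : ((n:ℝ)+1)^2 - s^2 ≠ 0 := by nlinarith [hc n]
    have h3 : 1 - s^2/((n:ℝ)+1)^2 ≠ 0 := by
      have := hq1 n; linarith
    field_simp
  have hcol : ∀ j : ℕ, ∑' n : ℕ, F n j = zetaR (2*(j+1)) * s ^ (2*(j+1)-1) := by
    intro j
    have h1 : ∀ n : ℕ, F n j = s^(2*(j+1)-1) * (1/((n:ℝ)+1)^(2*(j+1))) :=
      fun n => F_eq s n j
    rw [tsum_congr h1, tsum_mul_left]
    exact mul_comm _ _
  constructor
  · calc ∑' n : ℕ, 2*s/(((n:ℝ)+1)^2 - s^2)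
        = ∑' n : ℕ, 2 * ∑' j : ℕ, F n j := by
          refine tsum_congr fun n => ?_
          rw [hrow n]
          ring
    _ = 2 * ∑' n : ℕ, ∑' j : ℕ, F n j := tsum_mul_left
    _ = 2 * ∑' j : ℕ, ∑' n : ℕ, F n j := by rw [← Summable.tsum_comm hFsum]
    _ = 2 * ∑' j : ℕ, zetaR (2*(j+1)) * s ^ (2*(j+1)-1) := by
          rw [tsum_congr hcol]
  · exact hFabs'.congr fun j => (hjabs j).symm

/-- For 0 < |s| < 1, π·cot(πs) = 1/s − 2·∑_{j=1}^∞ ζ(2j)·s^{2j−1},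
the series converging absolutely. -/
theorem cot_power_series (s : ℝ) (hs : |s| < 1) (hs0 : s ≠ 0) :
    Real.pi * Real.cot (Real.pi * s) =
      1 / s - 2 * ∑' j : ℕ, zetaR (2 * (j + 1)) * s ^ (2 * (j + 1) - 1) ∧
    Summable (fun j : ℕ => |zetaR (2 * (j + 1)) * s ^ (2 * (j + 1) - 1)|) := by
  obtain ⟨hB1, hB2⟩ := seriesB hs
  refine ⟨?_, hB2⟩
  rw [← hB1]
  rcases lt_or_gt_of_ne hs0 with hneg | hpos
  · have hx0 : 0 < -s := by linarith
    have hx1 : -s < 1 := by rwa [abs_of_neg hneg] at hs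
    have h := cot_pf_pos hx0 hx1
    have hcot : Real.pi * Real.cot (Real.pi * s)
        = -(Real.pi * Real.cot (Real.pi * (-s))) := by
      rw [Real.cot_eq_cos_div_sin, Real.cot_eq_cos_div_sin,
        show Real.pi * (-s) = -(Real.pi * s) by ring, Real.cos_neg, Real.sin_neg,
        div_neg]
      ring
    rw [hcot, h]
    have hterm : ∀ n : ℕ, 2*(-s)/(((n:ℝ)+1)^2 - (-s)^2)
        = -(2*s/(((n:ℝ)+1)^2 - s^2)) := by
      intro n
      rw [neg_sq, show 2*(-s) = -(2*s) by ring, neg_div]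
    rw [tsum_congr hterm, tsum_neg]
    rw [div_neg]
    ring
  · exact cot_pf_pos hpos (by rwa [abs_of_pos hpos] at hs)
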